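/- For 1/2 < ν < 1 and 0 < ε ≤ 1, the Riemann map Ψ_ε from the domain Ω_ε = {z^ν : z ∈ B(i(ε + 1/(2ε)), 1/(2ε))} onto the upper half plane, given by Ψ_ε(z) = (z^{1/ν} - iε)/(1 + ε² + iε z^{1/ν}), satisfies for all z₁, z₂ ∈ Ω_ε: |Ψ_ε(z₁) - Ψ_ε(z₂)| is comparable (with universal constants) to (1/ε²) · |z₁^{1/ν} - z₂^{1/ν}| / (|z₁^{1/ν} - c(ε)| · |z₂^{1/ν} - c(ε)|), where c(ε) = i(ε + 1/ε). -/

import Mathlib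

/-- The approximating domain Ω_ε = {z^ν : z ∈ B(i(ε + 1/(2ε)), 1/(2ε))}. -/
noncomputable def OmegaEps (ν ε : ℝ) : Set ℂ :=
  (fun z : ℂ => z ^ ((ν : ℂ))) '' Metric.ball (Complex.I * ((ε : ℂ) + 1/(2*ε))) (1/(2*ε))

/-- The Riemann map Ψ_ε from Ω_ε onto the upper half plane. -/
noncomputable def PsiEps (ν ε : ℝ) (z : ℂ) : ℂ :=
  (z ^ ((1/(ν:ℂ))) - Complex.I * ε) / (1 + (ε:ℂ)^2 + Complex.I * ε * z ^ ((1/(ν:ℂ))))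

/-- c(ε) = i(ε + 1/ε). -/
noncomputable def cEps (ε : ℝ) : ℂ := Complex.I * ((ε : ℂ) + 1/ε)

open Complex Real

lemma denom_eq (ε : ℝ) (hε : 0 < ε) (w : ℂ) :
    1 + (ε:ℂ)^2 + Complex.I * ε * w = Complex.I * ε * (w - cEps ε) := by
  have hε0 : (ε:ℂ) ≠ 0 := Complex.ofReal_ne_zero.2 hε.ne'
  unfold cEps
  field_simp
  ring_nf
  simp [Complex.I_sq]
  ring

lemma key_eq (ε : ℝ) (hε : 0 < ε) (w₁ w₂ : ℂ) (h₁ : w₁ ≠ cEps ε) (h₂ : w₂ ≠ cEps ε) :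
    ‖(w₁ - Complex.I * ε) / (1 + (ε:ℂ)^2 + Complex.I * ε * w₁)
      - (w₂ - Complex.I * ε) / (1 + (ε:ℂ)^2 + Complex.I * ε * w₂)‖
    = (1/ε^2) * ‖w₁ - w₂‖ /
        (‖w₁ - cEps ε‖ * ‖w₂ - cEps ε‖) := by
  have hε0 : (ε:ℂ) ≠ 0 := Complex.ofReal_ne_zero.2 hε.ne'
  have hd₁ : 1 + (ε:ℂ)^2 + Complex.I * ε * w₁ = Complex.I * ε * (w₁ - cEps ε) := denom_eq ε hε w₁
  have hd₂ : 1 + (ε:ℂ)^2 + Complex.I * ε * w₂ = Complex.I * ε * (w₂ - cEps ε) := denom_eq ε hε w₂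
  have hn₁ : Complex.I * ε * (w₁ - cEps ε) ≠ 0 := by
    apply mul_ne_zero (mul_ne_zero Complex.I_ne_zero hε0) (sub_ne_zero.2 h₁)
  have hn₂ : Complex.I * ε * (w₂ - cEps ε) ≠ 0 := by
    apply mul_ne_zero (mul_ne_zero Complex.I_ne_zero hε0) (sub_ne_zero.2 h₂)
  rw [hd₁, hd₂]
  have hdiff : (w₁ - Complex.I * ε) / (Complex.I * ε * (w₁ - cEps ε))
      - (w₂ - Complex.I * ε) / (Complex.I * ε * (w₂ - cEps ε))
      = (w₁ - w₂) / ((Complex.I * ε * (w₁ - cEps ε)) * (Complex.I * ε * (w₂ - cEps ε))) := by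
    have hnum : (w₁ - Complex.I * ε) * (Complex.I * ε * (w₂ - cEps ε))
        - (Complex.I * ε * (w₁ - cEps ε)) * (w₂ - Complex.I * ε) = w₁ - w₂ := by
      unfold cEps
      field_simp
      ring_nf
      simp [Complex.I_sq, pow_succ]
      ring_nf
    rw [div_sub_div _ _ hn₁ hn₂, hnum]
  rw [hdiff, norm_div, norm_mul, norm_mul, norm_mul, norm_mul, norm_mul]
  simp only [Complex.norm_I, Complex.norm_real, Real.norm_eq_abs, abs_of_pos hε, one_mul]
  have ha : ‖w₁ - cEps ε‖ ≠ 0 := norm_ne_zero_iff.2 (sub_ne_zero.2 h₁)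
  have hb : ‖w₂ - cEps ε‖ ≠ 0 := norm_ne_zero_iff.2 (sub_ne_zero.2 h₂)
  field_simp

lemma cpow_comp (ν : ℝ) (hν0 : 0 < ν) (hν1 : ν < 1) (u : ℂ) (hu : 0 < u.im) :
    (u ^ ((ν:ℂ))) ^ ((1/(ν:ℂ))) = u := by
  have hu0 : u ≠ 0 := by
    intro h; rw [h] at hu; simp at hu
  have harg_pos : 0 < u.arg := by
    rcases lt_or_eq_of_le (Complex.arg_nonneg_iff.2 hu.le) with h | h
    · exact h
    · exfalso
      have := (Complex.arg_eq_zero_iff.1 h.symm).2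
      linarith
  have harg_lt : u.arg < Real.pi := Complex.arg_lt_pi_iff.2 (Or.inr hu.ne')
  have him : (Complex.log u * (ν:ℂ)).im = ν * u.arg := by
    simp [Complex.mul_im, Complex.log_im, mul_comm]
  have h₁ : -Real.pi < (Complex.log u * (ν:ℂ)).im := by
    rw [him]
    have : 0 < ν * u.arg := mul_pos hν0 harg_pos
    linarith [Real.pi_pos]
  have h₂ : (Complex.log u * (ν:ℂ)).im ≤ Real.pi := by
    rw [him]
    nlinarith [Real.pi_pos]
  have := (Complex.cpow_mul (x := u) (y := (ν:ℂ)) (1/(ν:ℂ)) h₁ h₂).symm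
  rw [this]
  have : (ν:ℂ) * (1/(ν:ℂ)) = 1 := by
    rw [mul_one_div, div_self (Complex.ofReal_ne_zero.2 hν0.ne')]
  rw [this, Complex.cpow_one]

theorem PsiEps_difference_comparable :
    ∃ c > 0, ∃ C > 0, ∀ (ν ε : ℝ), 1/2 < ν → ν < 1 → 0 < ε → ε ≤ 1 →
      ∀ z₁ ∈ OmegaEps ν ε, ∀ z₂ ∈ OmegaEps ν ε,
        c * ((1/ε^2) * ‖z₁ ^ ((1/(ν:ℂ))) - z₂ ^ ((1/(ν:ℂ)))‖ /
              (‖z₁ ^ ((1/(ν:ℂ))) - cEps ε‖ * ‖z₂ ^ ((1/(ν:ℂ))) - cEps ε‖))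
          ≤ ‖PsiEps ν ε z₁ - PsiEps ν ε z₂‖ ∧
        ‖PsiEps ν ε z₁ - PsiEps ν ε z₂‖ ≤
          C * ((1/ε^2) * ‖z₁ ^ ((1/(ν:ℂ))) - z₂ ^ ((1/(ν:ℂ)))‖ /
              (‖z₁ ^ ((1/(ν:ℂ))) - cEps ε‖ * ‖z₂ ^ ((1/(ν:ℂ))) - cEps ε‖)) := by
  refine ⟨1, one_pos, 1, one_pos, ?_⟩
  intro ν ε hν2 hν1 hε hε1 z₁ hz₁ z₂ hz₂
  have hν0 : 0 < ν := by linarith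
  -- unpack membership
  have hmem : ∀ z ∈ OmegaEps ν ε, z ^ ((1/(ν:ℂ))) ≠ cEps ε ∧
      ∃ u : ℂ, 0 < u.im ∧ z ^ ((1/(ν:ℂ))) = u ∧
        u ∈ Metric.ball (Complex.I * ((ε : ℂ) + 1/(2*ε))) (1/(2*ε)) := by
    intro z hz
    obtain ⟨u, hu, rfl⟩ := hz
    have hdist : ‖u - Complex.I * ((ε : ℂ) + 1/(2*ε))‖ < 1/(2*ε) := by
      rwa [Metric.mem_ball, Complex.dist_eq] at hu
    have him_center : (Complex.I * ((ε : ℂ) + 1/(2*ε))).im = ε + 1/(2*ε) := by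
      simp
    have him : 0 < u.im := by
      have h1 : |(u - Complex.I * ((ε : ℂ) + 1/(2*ε))).im| ≤
          ‖u - Complex.I * ((ε : ℂ) + 1/(2*ε))‖ := Complex.abs_im_le_norm _
      have h2 : (u - Complex.I * ((ε : ℂ) + 1/(2*ε))).im = u.im - (ε + 1/(2*ε)) := by
        rw [Complex.sub_im, him_center]
      rw [h2] at h1
      have := abs_le.1 h1
      have h3 : u.im - (ε + 1/(2*ε)) ≥ -(1/(2*ε)) := by linarith [this.1, hdist.le]
      nlinarith
    have hcomp : (u ^ ((ν:ℂ))) ^ ((1/(ν:ℂ))) = u := cpow_comp ν hν0 hν1 u him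
    refine ⟨?_, u, him, hcomp, hu⟩
    rw [hcomp]
    intro h
    rw [h] at hdist
    have : cEps ε - Complex.I * ((ε : ℂ) + 1/(2*ε)) = Complex.I * (1/(2*ε) : ℝ) := by
      unfold cEps
      have hε0 : (ε:ℂ) ≠ 0 := Complex.ofReal_ne_zero.2 hε.ne'
      push_cast
      field_simp
      ring
    rw [this] at hdist
    rw [norm_mul, Complex.norm_I, Complex.norm_real, Real.norm_eq_abs, one_mul,
      abs_of_pos (by positivity : (0:ℝ) < 1/(2*ε))] at hdist
    exact lt_irrefl _ hdist
  obtain ⟨hne₁, u₁, him₁, heq₁, -⟩ := hmem z₁ hz₁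
  obtain ⟨hne₂, u₂, him₂, heq₂, -⟩ := hmem z₂ hz₂
  have key := key_eq ε hε (z₁ ^ ((1/(ν:ℂ)))) (z₂ ^ ((1/(ν:ℂ)))) hne₁ hne₂
  have hpsi : PsiEps ν ε z₁ - PsiEps ν ε z₂ =
      (z₁ ^ ((1/(ν:ℂ))) - Complex.I * ε) / (1 + (ε:ℂ)^2 + Complex.I * ε * z₁ ^ ((1/(ν:ℂ))))
      - (z₂ ^ ((1/(ν:ℂ))) - Complex.I * ε) / (1 + (ε:ℂ)^2 + Complex.I * ε * z₂ ^ ((1/(ν:ℂ)))) := rfl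
  rw [hpsi, key]
  constructor <;> simp
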